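/- Let R be a Noetherian ring, A the largest right ideal of R with |A|_r < |R|_r, assumed nonzero. Then every prime ideal P of R with |R/P|_r = |R|_r contains A; consequently Λ(R) = Λ(R/A), where Λ(R) = {P ∈ Spec R : |R/P|_r = |R|_r} and Λ(R/A) is identified with the set of primes of R containing A whose quotient has full right Krull dimension. -/

import Mathlib

universe u

/-- `DevLE α o`: the Gabriel–Rentschler deviation of the preorder `α` is at most `o`. -/
def DevLE (α : Type u) [Preorder α] (o : Ordinal.{u}) : Prop :=
  ∀ f : ℕ → α, (∀ n, f (n + 1) ≤ f n) →
    ∃ N : ℕ, ∀ n, N ≤ n →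
      f n ≤ f (n + 1) ∨
        ∃ o' : {x : Ordinal.{u} // x < o},
          DevLE {y : α // f (n + 1) ≤ y ∧ y ≤ f n} o'.1
termination_by o
decreasing_by exact o'.2

/-- The deviation (Krull dimension) of a preorder, as the least ordinal bound. -/
noncomputable def dev (α : Type u) [Preorder α] : Ordinal.{u} := sInf {o | DevLE α o}

/-- The left Krull dimension of a ring: deviation of the lattice of left ideals. -/
noncomputable def lKdim (R : Type u) [Ring R] : Ordinal.{u} := dev (Submodule R R)

/-- The right Krull dimension of a ring: deviation of the lattice of right ideals. -/
noncomputable def rKdim (R : Type u) [Ring R] : Ordinal.{u} := dev (Submodule Rᵐᵒᵖ R)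

/-- Krull dimension of a right ideal `J` as a right module: deviation of `[⊥, J]`. -/
noncomputable def rIdealDim (R : Type u) [Ring R] (J : Submodule Rᵐᵒᵖ R) : Ordinal.{u} :=
  dev {I : Submodule Rᵐᵒᵖ R // I ≤ J}

/-- Krull dimension of a left ideal `J` as a left module. -/
noncomputable def lIdealDim (R : Type u) [Ring R] (J : Submodule R R) : Ordinal.{u} :=
  dev {I : Submodule R R // I ≤ J}

/-- A ring is right Krull homogeneous if every nonzero right ideal has full dimension. -/
def RightKH (R : Type u) [Ring R] : Prop :=
  ∀ J : Submodule Rᵐᵒᵖ R, J ≠ ⊥ → rIdealDim R J = rKdim R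

def LeftKH (R : Type u) [Ring R] : Prop :=
  ∀ J : Submodule R R, J ≠ ⊥ → lIdealDim R J = lKdim R

/-- A two-sided ideal is prime if it is proper and `aRb ⊆ P` implies `a ∈ P` or `b ∈ P`. -/
def IsPrimeT {R : Type u} [Ring R] (P : TwoSidedIdeal R) : Prop :=
  (P : Set R) ≠ Set.univ ∧ ∀ a b : R, (∀ r : R, a * r * b ∈ P) → a ∈ P ∨ b ∈ P

/-- Right Krull dimension of the quotient ring `R/I`. -/
noncomputable def rKdimQ {R : Type u} [Ring R] (I : TwoSidedIdeal R) : Ordinal.{u} :=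
  rKdim I.ringCon.Quotient

noncomputable def lKdimQ {R : Type u} [Ring R] (I : TwoSidedIdeal R) : Ordinal.{u} :=
  lKdim I.ringCon.Quotient

/-- `Λ(R)`: primes with full right Krull dimension. -/
def Lam (R : Type u) [Ring R] : Set (TwoSidedIdeal R) :=
  {P | IsPrimeT P ∧ rKdimQ P = rKdim R}

/-- `Λ'(R)`: primes with full left Krull dimension. -/
def Lam' (R : Type u) [Ring R] : Set (TwoSidedIdeal R) :=
  {P | IsPrimeT P ∧ lKdimQ P = lKdim R}

/-- A two-sided ideal viewed as a right ideal. -/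
def rightIdealOf {R : Type u} [Ring R] (I : TwoSidedIdeal R) : Submodule Rᵐᵒᵖ R where
  carrier := I
  zero_mem' := I.zero_mem
  add_mem' := I.add_mem
  smul_mem' := fun r x hx => I.mul_mem_right x r.unop hx

/-- A two-sided ideal viewed as a left ideal. -/
def leftIdealOf {R : Type u} [Ring R] (I : TwoSidedIdeal R) : Submodule R R where
  carrier := I
  zero_mem' := I.zero_mem
  add_mem' := I.add_mem
  smul_mem' := fun r x hx => I.mul_mem_left r x hx

/-- The right annihilator of a set, as a right ideal. -/
def rAnnIdeal (R : Type u) [Ring R] (S : Set R) : Submodule Rᵐᵒᵖ R where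
  carrier := {x | ∀ y ∈ S, y * x = 0}
  zero_mem' := by intro y _; simp
  add_mem' := by intro a b ha hb y hy; rw [mul_add, ha y hy, hb y hy, add_zero]
  smul_mem' := by
    intro r x hx y hy
    show y * (x * r.unop) = 0
    rw [← mul_assoc, hx y hy, zero_mul]

/-- The left annihilator of a set. -/
def lAnnSet (R : Type u) [Ring R] (S : Set R) : Set R := {x | ∀ y ∈ S, x * y = 0}

theorem devLE_iff {α : Type u} [Preorder α] {o : Ordinal.{u}} :
    DevLE α o ↔ ∀ f : ℕ → α, (∀ n, f (n + 1) ≤ f n) →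
    ∃ N : ℕ, ∀ n, N ≤ n →
      f n ≤ f (n + 1) ∨
        ∃ o' : {x : Ordinal.{u} // x < o},
          DevLE {y : α // f (n + 1) ≤ y ∧ y ≤ f n} o'.1 := by
  rw [DevLE]

theorem devLE_of_subsingleton {α : Type u} [Preorder α] (h : Subsingleton α) (o : Ordinal.{u}) :
    DevLE α o := by
  rw [devLE_iff]
  intro f _
  exact ⟨0, fun n _ => Or.inl (le_of_eq (h.elim _ _))⟩

theorem devLE_mono {α : Type u} [Preorder α] {o₁ o₂ : Ordinal.{u}} (h : o₁ ≤ o₂)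
    (hd : DevLE α o₁) : DevLE α o₂ := by
  rw [devLE_iff] at hd ⊢
  intro f hf
  obtain ⟨N, hN⟩ := hd f hf
  refine ⟨N, fun n hn => ?_⟩
  rcases hN n hn with h1 | ⟨o', h2⟩
  · exact Or.inl h1
  · exact Or.inr ⟨⟨o'.1, lt_of_lt_of_le o'.2 h⟩, h2⟩

theorem devLE_of_mono_inj {α β : Type u} [PartialOrder α] [PartialOrder β]
    (F : α → β) (hm : Monotone F) (hi : Function.Injective F) (o : Ordinal.{u})
    (h : DevLE β o) : DevLE α o := by
  rw [devLE_iff] at h ⊢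
  intro f hf
  obtain ⟨N, hN⟩ := h (F ∘ f) (fun n => hm (hf n))
  refine ⟨N, fun n hn => ?_⟩
  rcases hN n hn with h1 | ⟨o', h2⟩
  · exact Or.inl (le_of_eq (hi (le_antisymm (hm (hf n)) h1)).symm)
  · refine Or.inr ⟨o', ?_⟩
    refine devLE_of_mono_inj (fun y => ⟨F y.1, hm y.2.1, hm y.2.2⟩) ?_ ?_ o'.1 h2
    · intro x y hxy; exact hm hxy
    · intro x y hxy
      exact Subtype.ext (hi (congrArg Subtype.val hxy))
termination_by o
decreasing_by exact o'.2

section Interval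

variable {α : Type u} [Lattice α]

instance intervalLattice {q p : α} : Lattice {y : α // q ≤ y ∧ y ≤ p} :=
  { Subtype.partialOrder _ with
    sup := fun x y => ⟨x.1 ⊔ y.1, le_trans x.2.1 le_sup_left, sup_le x.2.2 y.2.2⟩
    le_sup_left := fun x y => show x.1 ≤ x.1 ⊔ y.1 from le_sup_left
    le_sup_right := fun x y => show y.1 ≤ x.1 ⊔ y.1 from le_sup_right
    sup_le := fun x y z h1 h2 => show x.1 ⊔ y.1 ≤ z.1 from sup_le h1 h2
    inf := fun x y => ⟨x.1 ⊓ y.1, le_inf x.2.1 y.2.1, le_trans inf_le_left x.2.2⟩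
    inf_le_left := fun x y => show x.1 ⊓ y.1 ≤ x.1 from inf_le_left
    inf_le_right := fun x y => show x.1 ⊓ y.1 ≤ y.1 from inf_le_right
    le_inf := fun x y z h1 h2 => show x.1 ≤ y.1 ⊓ z.1 from le_inf h1 h2 }

instance intervalModular [IsModularLattice α] {q p : α} :
    IsModularLattice {y : α // q ≤ y ∧ y ≤ p} := by
  constructor
  intro x y z h
  exact IsModularLattice.sup_inf_le_assoc_of_le (α := α) y.1 h

end Interval

theorem devLE_ext {α : Type u} [Lattice α] [IsModularLattice α] (o : Ordinal.{u}) (n : α)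
    (hl : DevLE {x : α // x ≤ n} o) (hu : DevLE {x : α // n ≤ x} o) : DevLE α o := by
  have H : ∀ o' : Ordinal.{u}, o' < o → ∀ p q : α, q ≤ p →
      DevLE {y : {x : α // x ≤ n} //
        (⟨q ⊓ n, inf_le_right⟩ : {x : α // x ≤ n}) ≤ y ∧ y ≤ ⟨p ⊓ n, inf_le_right⟩} o' →
      DevLE {y : {x : α // n ≤ x} //
        (⟨q ⊔ n, le_sup_right⟩ : {x : α // n ≤ x}) ≤ y ∧ y ≤ ⟨p ⊔ n, le_sup_right⟩} o' →
      DevLE {y : α // q ≤ y ∧ y ≤ p} o' := by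
    intro o' ho' p q hqp h1 h2
    have n' : {y : α // q ≤ y ∧ y ≤ p} := ⟨q ⊔ n ⊓ p, le_sup_left, sup_le hqp inf_le_right⟩
    refine devLE_ext o' (⟨q ⊔ n ⊓ p, le_sup_left, sup_le hqp inf_le_right⟩ :
        {y : α // q ≤ y ∧ y ≤ p}) ?_ ?_
    · -- lower part
      refine devLE_of_mono_inj
        (fun (x : {x : {y : α // q ≤ y ∧ y ≤ p} //
            x ≤ ⟨q ⊔ n ⊓ p, le_sup_left, sup_le hqp inf_le_right⟩}) =>
          ⟨⟨x.1.1 ⊓ n, inf_le_right⟩, inf_le_inf_right n x.1.2.1,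
          inf_le_inf_right n x.1.2.2⟩)
        (fun x y hxy => show x.1.1 ⊓ n ≤ y.1.1 ⊓ n from inf_le_inf_right n hxy) ?_ o' h1
      intro x y hxy
      have e : x.1.1 ⊓ n = y.1.1 ⊓ n := congrArg (Subtype.val ∘ Subtype.val) hxy
      have key : ∀ z : {x : {y : α // q ≤ y ∧ y ≤ p} //
          x ≤ ⟨q ⊔ n ⊓ p, le_sup_left, sup_le hqp inf_le_right⟩}, z.1.1 = q ⊔ z.1.1 ⊓ n := by
        intro z
        have hz : z.1.1 ≤ q ⊔ n ⊓ p := z.2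
        have h5 : z.1.1 = (q ⊔ n ⊓ p) ⊓ z.1.1 := (inf_eq_right.mpr hz).symm
        have h6 : (q ⊔ n ⊓ p) ⊓ z.1.1 = q ⊔ n ⊓ p ⊓ z.1.1 :=
          sup_inf_assoc_of_le (n ⊓ p) z.1.2.1
        have h7 : n ⊓ p ⊓ z.1.1 = z.1.1 ⊓ n := by
          rw [inf_assoc, inf_eq_right.mpr z.1.2.2, inf_comm]
        calc z.1.1 = (q ⊔ n ⊓ p) ⊓ z.1.1 := h5
          _ = q ⊔ n ⊓ p ⊓ z.1.1 := h6
          _ = q ⊔ z.1.1 ⊓ n := by rw [h7]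
      apply Subtype.ext; apply Subtype.ext
      exact ((key x).trans (by rw [e])).trans (key y).symm
    · -- upper part
      refine devLE_of_mono_inj
        (fun (x : {x : {y : α // q ≤ y ∧ y ≤ p} //
            (⟨q ⊔ n ⊓ p, le_sup_left, sup_le hqp inf_le_right⟩ :
              {y : α // q ≤ y ∧ y ≤ p}) ≤ x}) =>
          ⟨⟨x.1.1 ⊔ n, le_sup_right⟩, sup_le_sup_right x.1.2.1 n,
          sup_le_sup_right x.1.2.2 n⟩)
        (fun x y hxy =>
          sup_le_sup_right (show (x.1.1 : α) ≤ y.1.1 from hxy) n) ?_ o' h2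
      intro x y hxy
      have e : x.1.1 ⊔ n = y.1.1 ⊔ n := congrArg (Subtype.val ∘ Subtype.val) hxy
      have key : ∀ z : {x : {y : α // q ≤ y ∧ y ≤ p} //
          (⟨q ⊔ n ⊓ p, le_sup_left, sup_le hqp inf_le_right⟩ :
            {y : α // q ≤ y ∧ y ≤ p}) ≤ x}, z.1.1 = (z.1.1 ⊔ n) ⊓ p := by
        intro z
        have hz : q ⊔ n ⊓ p ≤ z.1.1 := z.2
        have h5 : n ⊓ p ≤ z.1.1 := le_trans le_sup_right hz
        rw [sup_inf_assoc_of_le n z.1.2.2, sup_eq_left.mpr h5]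
      apply Subtype.ext; apply Subtype.ext
      exact ((key x).trans (by rw [e])).trans (key y).symm
  rw [devLE_iff]
  intro f hf
  obtain ⟨N₁, hN₁⟩ := devLE_iff.mp hl (fun k => ⟨f k ⊓ n, inf_le_right⟩)
    (fun k => show f (k+1) ⊓ n ≤ f k ⊓ n from inf_le_inf_right n (hf k))
  obtain ⟨N₂, hN₂⟩ := devLE_iff.mp hu (fun k => ⟨f k ⊔ n, le_sup_right⟩)
    (fun k => show f (k+1) ⊔ n ≤ f k ⊔ n from sup_le_sup_right (hf k) n)
  refine ⟨max N₁ N₂, fun k hk => ?_⟩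
  rcases hN₁ k (le_trans (le_max_left _ _) hk) with hg | ⟨o₁, ho₁⟩ <;>
    rcases hN₂ k (le_trans (le_max_right _ _) hk) with hh | ⟨o₂, ho₂⟩
  · -- both stabilize
    refine Or.inl ?_
    have hg' : f k ⊓ n ≤ f (k+1) ⊓ n := hg
    have hh' : f k ⊔ n ≤ f (k+1) ⊔ n := hh
    have h3 : f k ≤ (f (k+1) ⊔ n) ⊓ f k := le_inf (le_trans le_sup_left hh') le_rfl
    have h4 : (f (k+1) ⊔ n) ⊓ f k = f (k+1) ⊔ n ⊓ f k := sup_inf_assoc_of_le n (hf k)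
    have h5 : n ⊓ f k ≤ f (k+1) := le_trans (le_of_eq (inf_comm n (f k)))
      (le_trans hg' inf_le_left)
    exact le_trans h3 (le_trans (le_of_eq h4) (sup_le le_rfl h5))
  · -- lower stabilizes, upper small
    refine Or.inr ⟨o₂, H o₂.1 o₂.2 (f k) (f (k+1)) (hf k) ?_ ho₂⟩
    refine devLE_of_subsingleton ⟨fun x y => ?_⟩ o₂.1
    have hg' : f k ⊓ n ≤ f (k+1) ⊓ n := hg
    apply Subtype.ext; apply Subtype.ext
    exact le_antisymm (le_trans x.2.2 (le_trans hg' y.2.1))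
      (le_trans y.2.2 (le_trans hg' x.2.1))
  · -- upper stabilizes, lower small
    refine Or.inr ⟨o₁, H o₁.1 o₁.2 (f k) (f (k+1)) (hf k) ho₁ ?_⟩
    refine devLE_of_subsingleton ⟨fun x y => ?_⟩ o₁.1
    have hh' : f k ⊔ n ≤ f (k+1) ⊔ n := hh
    apply Subtype.ext; apply Subtype.ext
    exact le_antisymm (le_trans x.2.2 (le_trans hh' y.2.1))
      (le_trans y.2.2 (le_trans hh' x.2.1))
  · -- both small
    refine Or.inr ⟨⟨max o₁.1 o₂.1, max_lt o₁.2 o₂.2⟩,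
      H _ (max_lt o₁.2 o₂.2) (f k) (f (k+1)) (hf k)
        (devLE_mono (le_max_left _ _) ho₁) (devLE_mono (le_max_right _ _) ho₂)⟩
termination_by o
decreasing_by exact ho'

section Modules

variable {S M N : Type u} [Ring S] [AddCommGroup M] [AddCommGroup N] [Module S M] [Module S N]

theorem devLE_equiv (e : M ≃ₗ[S] N) (o : Ordinal.{u}) (h : DevLE (Submodule S N) o) :
    DevLE (Submodule S M) o :=
  devLE_of_mono_inj (fun p => p.map (e : M →ₗ[S] N)) (fun _ _ h => Submodule.map_mono h)
    (Submodule.map_injective_of_injective e.injective) o h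

theorem devLE_prod (o : Ordinal.{u}) (hM : DevLE (Submodule S M) o)
    (hN : DevLE (Submodule S N) o) : DevLE (Submodule S (M × N)) o := by
  refine devLE_ext o (Submodule.fst S M N) ?_ ?_
  · have key : ∀ (B C : {K : Submodule S (M × N) // K ≤ Submodule.fst S M N}),
        Submodule.map (LinearMap.fst S M N) B.1 = Submodule.map (LinearMap.fst S M N) C.1 →
        ∀ x, x ∈ B.1 → x ∈ C.1 := by
      intro B C hBC x hx
      have hx2 : x.2 = 0 := by simpa [Submodule.fst] using B.2 hx
      have hx1 : x.1 ∈ Submodule.map (LinearMap.fst S M N) C.1 :=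
        hBC ▸ Submodule.mem_map_of_mem hx
      obtain ⟨y, hy, hyx⟩ := hx1
      have hy2 : y.2 = 0 := by simpa [Submodule.fst] using C.2 hy
      have hxy : y = x := Prod.ext hyx (by rw [hy2, hx2])
      rwa [← hxy]
    refine devLE_of_mono_inj (fun K => Submodule.map (LinearMap.fst S M N) K.1)
      (fun _ _ h => Submodule.map_mono h) ?_ o hM
    intro B C h
    exact Subtype.ext (le_antisymm (key B C h) (key C B h.symm))
  · have key : ∀ (B C : {K : Submodule S (M × N) // Submodule.fst S M N ≤ K}),
        Submodule.map (LinearMap.snd S M N) B.1 = Submodule.map (LinearMap.snd S M N) C.1 →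
        ∀ x, x ∈ B.1 → x ∈ C.1 := by
      intro B C hBC x hx
      have hx2 : x.2 ∈ Submodule.map (LinearMap.snd S M N) C.1 :=
        hBC ▸ Submodule.mem_map_of_mem hx
      obtain ⟨y, hy, hyx⟩ := hx2
      have hfst : ((x.1 - y.1, (0 : N)) : M × N) ∈ C.1 := C.2 (by simp [Submodule.fst])
      have hxe : x = y + (x.1 - y.1, (0 : N)) := by
        ext
        · simp
        · simp only [Prod.snd_add, add_zero]
          exact hyx.symm
      rw [hxe]
      exact C.1.add_mem hy hfst
    refine devLE_of_mono_inj (fun K => Submodule.map (LinearMap.snd S M N) K.1)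
      (fun _ _ h => Submodule.map_mono h) ?_ o hN
    intro B C h
    exact Subtype.ext (le_antisymm (key B C h) (key C B h.symm))

/-- `Fin (m+1) → M` is linearly equivalent to `M × (Fin m → M)`. -/
def finSuccLEquiv (S M : Type u) [Ring S] [AddCommGroup M] [Module S M] (m : ℕ) :
    (Fin (m + 1) → M) ≃ₗ[S] M × (Fin m → M) where
  toFun f := (f 0, Fin.tail f)
  invFun p := Fin.cons p.1 p.2
  left_inv f := Fin.cons_self_tail f
  right_inv p := by simp [Fin.tail_cons]
  map_add' f g := rfl
  map_smul' c f := rfl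

theorem devLE_pi (o : Ordinal.{u}) (hM : DevLE (Submodule S M) o) :
    ∀ m : ℕ, DevLE (Submodule S (Fin m → M)) o
  | 0 => devLE_of_subsingleton
      ⟨fun p q => by
        ext x
        rw [show x = 0 from Subsingleton.elim x 0]
        exact iff_of_true p.zero_mem q.zero_mem⟩ o
  | (m + 1) => devLE_equiv (finSuccLEquiv S M m) o (devLE_prod o hM (devLE_pi o hM m))

end Modules

/-- Pullback of a right ideal of `R/c` to a right ideal of `R`. -/
def pullIdeal {R : Type u} [Ring R] (c : RingCon R)
    (J : Submodule c.Quotientᵐᵒᵖ c.Quotient) : Submodule Rᵐᵒᵖ R where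
  carrier := (c.mk') ⁻¹' J
  zero_mem' := by
    show c.mk' 0 ∈ J
    rw [map_zero]; exact J.zero_mem
  add_mem' := by
    intro x y hx hy
    show c.mk' (x + y) ∈ J
    rw [map_add]; exact J.add_mem hx hy
  smul_mem' := by
    intro r x hx
    show c.mk' (x * r.unop) ∈ J
    rw [map_mul]
    exact J.smul_mem (MulOpposite.op (c.mk' r.unop)) hx

theorem pullIdeal_mono {R : Type u} [Ring R] (c : RingCon R)
    {J J' : Submodule c.Quotientᵐᵒᵖ c.Quotient} (h : J ≤ J') :
    pullIdeal c J ≤ pullIdeal c J' := fun _ hx => h hx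

theorem pullIdeal_injective {R : Type u} [Ring R] (c : RingCon R) :
    Function.Injective (pullIdeal c) := by
  intro J J' h
  ext q
  obtain ⟨x, rfl⟩ : ∃ x, c.mk' x = q := Quot.inductionOn q fun x => ⟨x, rfl⟩
  constructor
  · intro hx
    exact (show x ∈ pullIdeal c J' from h ▸ (hx : x ∈ pullIdeal c J))
  · intro hx
    exact (show x ∈ pullIdeal c J from h ▸ (hx : x ∈ pullIdeal c J'))

/-- If `A ≠ 0` is the largest right ideal with small Krull dimension, then
every prime of full right Krull dimension contains `A`, and hence `Λ(R) = Λ(R/A)`. -/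
theorem stmt7 (R : Type u) [Ring R] [IsNoetherianRing R] [IsNoetherianRing Rᵐᵒᵖ]
    (A : TwoSidedIdeal R)
    (h1 : rIdealDim R (rightIdealOf A) < rKdim R)
    (h2 : ∀ I : Submodule Rᵐᵒᵖ R, rIdealDim R I < rKdim R → I ≤ rightIdealOf A)
    (hne : A ≠ ⊥) :
    (∀ P : TwoSidedIdeal R, IsPrimeT P → rKdimQ P = rKdim R → A ≤ P) ∧
      Lam R = {P : TwoSidedIdeal R | IsPrimeT P ∧ A ≤ P ∧ rKdimQ P = rKdim R} := by
  classical
  have main : ∀ P : TwoSidedIdeal R, IsPrimeT P → rKdimQ P = rKdim R → A ≤ P := by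
    intro P hP hPd
    by_contra hAP
    obtain ⟨a0, ha0A, ha0P⟩ : ∃ x ∈ A, x ∉ P := SetLike.not_le_iff_exists.mp hAP
    set A' : Submodule Rᵐᵒᵖ R := rightIdealOf A with hA'
    set d : Ordinal.{u} := rIdealDim R A' with hd
    have hdlt : d < rKdim R := h1
    -- the defining set for `rKdim R` is nonempty
    have hRne : {o : Ordinal.{u} | DevLE (Submodule Rᵐᵒᵖ R) o}.Nonempty := by
      by_contra h
      rw [Set.not_nonempty_iff_eq_empty] at h
      have hz : rKdim R = 0 := by
        rw [show rKdim R = sInf {o : Ordinal.{u} | DevLE (Submodule Rᵐᵒᵖ R) o} from rfl, h]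
        simp
      rw [hz] at hdlt
      exact absurd hdlt (by simp)
    have hRdev : DevLE (Submodule Rᵐᵒᵖ R) (rKdim R) := csInf_mem hRne
    have hInt : DevLE {I : Submodule Rᵐᵒᵖ R // I ≤ A'} (rKdim R) :=
      devLE_of_mono_inj Subtype.val (fun _ _ h => h) Subtype.val_injective _ hRdev
    have hIntd : DevLE {I : Submodule Rᵐᵒᵖ R // I ≤ A'} d := csInf_mem ⟨_, hInt⟩
    have hMod : DevLE (Submodule Rᵐᵒᵖ ↥A') d :=
      devLE_of_mono_inj
        (fun p => (⟨Submodule.map A'.subtype p, Submodule.map_subtype_le A' p⟩ :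
          {I : Submodule Rᵐᵒᵖ R // I ≤ A'}))
        (fun _ _ h => Submodule.map_mono h)
        (fun p q h => Submodule.map_injective_of_injective A'.injective_subtype
          (congrArg Subtype.val h)) d hIntd
    -- generators of `A` as a left ideal
    obtain ⟨s, hs⟩ := (IsNoetherian.noetherian (leftIdealOf A) : (leftIdealOf A).FG)
    set m := s.card with hm
    set gen : Fin m → R := fun i => (s.equivFin.symm i : R) with hgen
    have hgenA : ∀ i, gen i ∈ A := by
      intro i
      have hmem : ((s.equivFin.symm i : R)) ∈ (s : Set R) :=
        Finset.mem_coe.mpr (s.equivFin.symm i).2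
      have h2' := Submodule.subset_span (R := R) hmem
      rw [hs] at h2'
      exact h2'
    -- the map `r ↦ (gen i * r)` into `(↥A')^m`
    set Φ : R →ₗ[Rᵐᵒᵖ] (Fin m → ↥A') :=
      { toFun := fun r => fun i => ⟨gen i * r, A.mul_mem_right (gen i) r (hgenA i)⟩
        map_add' := by
          intro x y
          funext i
          exact Subtype.ext (mul_add (gen i) x y)
        map_smul' := by
          intro c x
          funext i
          exact Subtype.ext (mul_assoc (gen i) x c.unop).symm } with hPhi
    -- the kernel of Φ is contained in P
    have hker : ∀ b : R, (∀ i, gen i * b = 0) → b ∈ P := by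
      intro b hb
      have hAb : ∀ y, y ∈ leftIdealOf A → y * b = 0 := by
        intro y hy
        rw [← hs] at hy
        induction hy using Submodule.span_induction with
        | mem x hx =>
          have hgx : gen (s.equivFin ⟨x, hx⟩) = x := by
            simp [hgen]
          rw [← hgx]
          exact hb _
        | zero => rw [zero_mul]
        | add x y _ _ ihx ihy => rw [add_mul, ihx, ihy, add_zero]
        | smul c x _ ih =>
          show (c • x) * b = 0
          rw [smul_eq_mul, mul_assoc, ih, mul_zero]
      have hrb : ∀ r : R, a0 * r * b ∈ P := by
        intro r
        have h0 : (a0 * r) * b = 0 :=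
          hAb (a0 * r) (A.mul_mem_right a0 r ha0A)
        rw [h0]
        exact P.zero_mem
      rcases hP.2 a0 b hrb with h | h
      · exact absurd h ha0P
      · exact h
    -- pull back right ideals of R/P and push into `(↥A')^m`
    have hkerP : LinearMap.ker Φ ≤ pullIdeal P.ringCon ⊥ → True := fun _ => trivial
    have hkerle : ∀ J : Submodule P.ringCon.Quotientᵐᵒᵖ P.ringCon.Quotient,
        LinearMap.ker Φ ≤ pullIdeal P.ringCon J := by
      intro J b hb
      have hb' : ∀ i, gen i * b = 0 := by
        intro i
        have := congrFun (LinearMap.mem_ker.mp hb) i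
        exact congrArg Subtype.val this
      have hbP : b ∈ P := hker b hb'
      show P.ringCon.mk' b ∈ J
      have : (P.ringCon.mk' b : P.ringCon.Quotient) = 0 :=
        (RingCon.eq _).mpr ((TwoSidedIdeal.mem_iff P b).mp hbP)
      rw [this]
      exact J.zero_mem
    have hQ : DevLE (Submodule P.ringCon.Quotientᵐᵒᵖ P.ringCon.Quotient) d := by
      refine devLE_of_mono_inj
        (fun J => Submodule.map Φ (pullIdeal P.ringCon J))
        (fun J J' h => Submodule.map_mono (pullIdeal_mono P.ringCon h)) ?_ d
        (devLE_pi d hMod m)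
      intro J J' h
      have e1 : pullIdeal P.ringCon J = pullIdeal P.ringCon J' := by
        have c1 : Submodule.comap Φ (Submodule.map Φ (pullIdeal P.ringCon J)) =
            Submodule.comap Φ (Submodule.map Φ (pullIdeal P.ringCon J')) :=
          congrArg (Submodule.comap Φ) h
        rwa [Submodule.comap_map_eq, Submodule.comap_map_eq,
          sup_eq_left.mpr (hkerle J), sup_eq_left.mpr (hkerle J')] at c1
      exact pullIdeal_injective P.ringCon e1
    have hle : rKdimQ P ≤ d := csInf_le' hQ
    have : rKdim R < rKdim R := lt_of_le_of_lt (hPd ▸ hle) hdlt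
    exact lt_irrefl _ this
  refine ⟨main, ?_⟩
  ext P
  simp only [Lam, Set.mem_setOf_eq]
  exact ⟨fun ⟨hp, hdim⟩ => ⟨hp, main P hp hdim, hdim⟩, fun ⟨hp, _, hdim⟩ => ⟨hp, hdim⟩⟩
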